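/- Fix integers p, q ≥ 2 and indices 1 ≤ i < p, 1 ≤ j < q. Then the set F_{ij} = {C ∈ M_{p×q} : c_{i,j} + c_{i+1,j+1} = c_{i,j+1} + c_{i+1,j}} equals the convex hull of V \ {(1/(i(q−j))) · NE(i×(q−j)), (1/((p−i)j)) · SW((p−i)×j)}, where V is the vertex set of M_{p×q} consisting of the matrices (1/(ab))·NE(a×b) and (1/(ab))·SW(a×b) for 1 ≤ a < p, 1 ≤ b < q, together with (1/q)·HOR(i) for 1 ≤ i ≤ p and (1/p)·VER(j) for 1 ≤ j ≤ q. -/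

import Mathlib

open Finset

/-- The Monge property for a `p × q` real matrix (indices are 0-based). -/
def IsMonge {p q : ℕ} (C : Matrix (Fin p) (Fin q) ℝ) : Prop :=
  ∀ i I : Fin p, ∀ j J : Fin q, i < I → j < J → C i j + C I J ≤ C i J + C I j

/-- The Monge polytope: `p × q` matrices with nonnegative entries summing to 1 that
have the Monge property. -/
def Mpq (p q : ℕ) : Set (Matrix (Fin p) (Fin q) ℝ) :=
  {C | (∀ i j, 0 ≤ C i j) ∧ (∑ i, ∑ j, C i j) = 1 ∧ IsMonge C}

/-- `NE p q a b`: the `p × q` 0/1 matrix with (1-based) `(k, l)` entry 1 iff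
`k ≤ a ∧ l > q - b`. -/
def NE (p q a b : ℕ) : Matrix (Fin p) (Fin q) ℝ :=
  Matrix.of fun k l => if k.val + 1 ≤ a ∧ q - b < l.val + 1 then 1 else 0

/-- `SW p q a b`: the `p × q` 0/1 matrix with (1-based) `(k, l)` entry 1 iff
`k > p - a ∧ l ≤ b`. -/
def SW (p q a b : ℕ) : Matrix (Fin p) (Fin q) ℝ :=
  Matrix.of fun k l => if p - a < k.val + 1 ∧ l.val + 1 ≤ b then 1 else 0

/-- `HOR p q i`: the `p × q` 0/1 matrix with (1-based) `(k, l)` entry 1 iff `k = i`. -/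
def HOR (p q i : ℕ) : Matrix (Fin p) (Fin q) ℝ :=
  Matrix.of fun k _ => if k.val + 1 = i then 1 else 0

/-- `VER p q j`: the `p × q` 0/1 matrix with (1-based) `(k, l)` entry 1 iff `l = j`. -/
def VER (p q j : ℕ) : Matrix (Fin p) (Fin q) ℝ :=
  Matrix.of fun _ l => if l.val + 1 = j then 1 else 0

/-- The candidate vertex set of the Monge polytope `M_{p×q}`. -/
def Vpq (p q : ℕ) : Set (Matrix (Fin p) (Fin q) ℝ) :=
  {M | ∃ a ∈ Finset.Ico 1 p, ∃ b ∈ Finset.Ico 1 q,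
      M = (1 / ((a : ℝ) * (b : ℝ))) • NE p q a b} ∪
  {M | ∃ a ∈ Finset.Ico 1 p, ∃ b ∈ Finset.Ico 1 q,
      M = (1 / ((a : ℝ) * (b : ℝ))) • SW p q a b} ∪
  {M | ∃ i ∈ Finset.Icc 1 p, M = (1 / (q : ℝ)) • HOR p q i} ∪
  {M | ∃ j ∈ Finset.Icc 1 q, M = (1 / (p : ℝ)) • VER p q j}


/- ===================== Auxiliary development ===================== -/

namespace MongeAux
open scoped Classical

/-- Second difference of a grid function. -/
def dd (f : ℕ → ℕ → ℝ) (k l : ℕ) : ℝ := f k (l+1) + f (k+1) l - f k l - f (k+1) (l+1)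

def gNE (p q a b : ℕ) (k l : ℕ) : ℝ := if k + 1 ≤ a ∧ q - b < l + 1 then 1 else 0
def gSW (p q a b : ℕ) (k l : ℕ) : ℝ := if p - a < k + 1 ∧ l + 1 ≤ b then 1 else 0
def gH (i : ℕ) (k _l : ℕ) : ℝ := if k + 1 = i then 1 else 0
def gV (j : ℕ) (_k l : ℕ) : ℝ := if l + 1 = j then 1 else 0

def Cone (p q : ℕ) (f : ℕ → ℕ → ℝ) : Prop :=
  (∀ k, k < p → ∀ l, l < q → 0 ≤ f k l) ∧
  (∀ k l, k + 1 < p → l + 1 < q → 0 ≤ dd f k l)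

noncomputable def repSum (p q : ℕ) (n s : ℕ → ℕ → ℝ) (h v : ℕ → ℝ) (k l : ℕ) : ℝ :=
  (∑ a ∈ Ico 1 p, ∑ b ∈ Ico 1 q, n a b * gNE p q a b k l)
  + (∑ a ∈ Ico 1 p, ∑ b ∈ Ico 1 q, s a b * gSW p q a b k l)
  + (∑ i ∈ Icc 1 p, h i * gH i k l)
  + (∑ j ∈ Icc 1 q, v j * gV j k l)

def Rep (p q : ℕ) (f : ℕ → ℕ → ℝ) : Prop :=
  ∃ n s : ℕ → ℕ → ℝ, ∃ h v : ℕ → ℝ,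
    (∀ a b, 0 ≤ n a b) ∧ (∀ a b, 0 ≤ s a b) ∧ (∀ i, 0 ≤ h i) ∧ (∀ j, 0 ≤ v j) ∧
    ∀ k, k < p → ∀ l, l < q → f k l = repSum p q n s h v k l

noncomputable def mu (p q : ℕ) (f : ℕ → ℕ → ℝ) : ℕ :=
  (((range p) ×ˢ (range q)).filter (fun x => f x.1 x.2 ≠ 0)).card
  + (((range (p-1)) ×ˢ (range (q-1))).filter (fun x => dd f x.1 x.2 ≠ 0)).card

lemma telesc (g : ℕ → ℝ) {m n : ℕ} (h : m ≤ n) :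
    ∑ k ∈ Ico m n, (g k - g (k+1)) = g m - g n := by
  induction n, h using Nat.le_induction with
  | base => simp
  | succ n hn ih => rw [Finset.sum_Ico_succ_top (by omega), ih]; ring

lemma sum_dd (f : ℕ → ℕ → ℝ) {k1 k2 l1 l2 : ℕ} (hk : k1 ≤ k2) (hl : l1 ≤ l2) :
    ∑ k ∈ Ico k1 k2, ∑ l ∈ Ico l1 l2, dd f k l
      = f k1 l2 + f k2 l1 - f k1 l1 - f k2 l2 := by
  have inner : ∀ k, ∑ l ∈ Ico l1 l2, dd f k l
      = (fun k => f k l2 - f k l1) k - (fun k => f k l2 - f k l1) (k+1) := by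
    intro k
    calc ∑ l ∈ Ico l1 l2, dd f k l
        = ∑ l ∈ Ico l1 l2, ((fun l => f (k+1) l - f k l) l - (fun l => f (k+1) l - f k l) (l+1)) :=
          Finset.sum_congr rfl (fun l _ => by simp only [dd]; ring)
      _ = _ := by rw [telesc _ hl]; simp only; ring
  rw [Finset.sum_congr rfl (fun k _ => inner k), telesc (fun k => f k l2 - f k l1) hk]
  ring

lemma dd_prod (u v : ℕ → ℝ) (k l : ℕ) :
    dd (fun k l => u k * v l) k l = (u k - u (k+1)) * (v (l+1) - v l) := by
  simp only [dd]; ring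

lemma dd_gNE (p q a b k l : ℕ) :
    dd (gNE p q a b) k l = if k + 1 = a ∧ l + 1 = q - b then 1 else 0 := by
  have : gNE p q a b = fun k l =>
      (if k + 1 ≤ a then (1:ℝ) else 0) * (if q - b < l + 1 then 1 else 0) := by
    funext k l
    simp only [gNE]
    split_ifs with h h1 h2 h1 <;> simp_all <;> norm_num
  rw [this, dd_prod]
  split_ifs with h1 h2 h3 h4 h5 h6 h7 h8 h9 h10 h11 h12 h13 h14 <;>
    first
      | (exfalso; omega)
      | norm_num
      | (exfalso; norm_num)

lemma dd_gSW (p q a b k l : ℕ) :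
    dd (gSW p q a b) k l = if k + 1 = p - a ∧ l + 1 = b then 1 else 0 := by
  have : gSW p q a b = fun k l =>
      (if p - a < k + 1 then (1:ℝ) else 0) * (if l + 1 ≤ b then 1 else 0) := by
    funext k l
    simp only [gSW]
    split_ifs with h h1 h2 h1 <;> simp_all <;> norm_num
  rw [this, dd_prod]
  split_ifs with h1 h2 h3 h4 h5 h6 h7 h8 h9 h10 h11 h12 h13 h14 <;>
    first
      | (exfalso; omega)
      | norm_num
      | (exfalso; norm_num)

lemma dd_gH (i k l : ℕ) : dd (gH i) k l = 0 := by simp [dd, gH]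

lemma dd_gV (j k l : ℕ) : dd (gV j) k l = 0 := by
  simp [dd, gV]

lemma dd_sub_smul (f g : ℕ → ℕ → ℝ) (t : ℝ) (k l : ℕ) :
    dd (fun k l => f k l - t * g k l) k l = dd f k l - t * dd g k l := by
  simp only [dd]; ring

lemma dd_add (f g : ℕ → ℕ → ℝ) (k l : ℕ) :
    dd (fun k l => f k l + g k l) k l = dd f k l + dd g k l := by
  simp only [dd]; ring

lemma dd_smul (f : ℕ → ℕ → ℝ) (c : ℝ) (k l : ℕ) :
    dd (fun k l => c * f k l) k l = c * dd f k l := by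
  simp only [dd]; ring

lemma dd_sum {ι : Type*} (s : Finset ι) (G : ι → ℕ → ℕ → ℝ) (k l : ℕ) :
    dd (fun k l => ∑ x ∈ s, G x k l) k l = ∑ x ∈ s, dd (G x) k l := by
  simp only [dd, Finset.sum_sub_distrib, Finset.sum_add_distrib]

lemma sum_mul_indicator_pair {s u : Finset ℕ} {a0 b0 : ℕ} (ha : a0 ∈ s) (hb : b0 ∈ u)
    (X : ℕ → ℕ → ℝ) (P : ℕ → ℕ → Prop) [∀ a b, Decidable (P a b)]
    (hP : ∀ a ∈ s, ∀ b ∈ u, (P a b ↔ (a = a0 ∧ b = b0))) :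
    ∑ a ∈ s, ∑ b ∈ u, X a b * (if P a b then 1 else 0) = X a0 b0 := by
  have : ∀ a ∈ s, ∀ b ∈ u, X a b * (if P a b then 1 else 0)
      = if a = a0 ∧ b = b0 then X a b else 0 := by
    intro a hA b hB
    rw [if_congr (hP a hA b hB) rfl rfl]
    split_ifs <;> simp
  rw [Finset.sum_congr rfl (fun a hA => Finset.sum_congr rfl (fun b hB => this a hA b hB))]
  rw [Finset.sum_eq_single a0 (fun a _ hane => by
      apply Finset.sum_eq_zero; intro b _; rw [if_neg (by tauto)]) (fun h => (h ha).elim)]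
  rw [Finset.sum_eq_single b0 (fun b _ hbne => by rw [if_neg (by tauto)])
    (fun h => (h hb).elim)]
  rw [if_pos ⟨rfl, rfl⟩]

lemma mu_lt (p q : ℕ) (f f' : ℕ → ℕ → ℝ)
    (hent : ∀ k, k < p → ∀ l, l < q → f' k l ≠ 0 → f k l ≠ 0)
    (hdd : ∀ k l, k + 1 < p → l + 1 < q → dd f' k l ≠ 0 → dd f k l ≠ 0)
    (hw : (∃ k, k < p ∧ ∃ l, l < q ∧ f k l ≠ 0 ∧ f' k l = 0) ∨
          (∃ k l, k + 1 < p ∧ l + 1 < q ∧ dd f k l ≠ 0 ∧ dd f' k l = 0)) :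
    mu p q f' < mu p q f := by
  have h1 : (((range p) ×ˢ (range q)).filter (fun x => f' x.1 x.2 ≠ 0)) ⊆
      (((range p) ×ˢ (range q)).filter (fun x => f x.1 x.2 ≠ 0)) := by
    intro x hx
    simp only [Finset.mem_filter, Finset.mem_product, Finset.mem_range] at hx ⊢
    exact ⟨hx.1, hent _ hx.1.1 _ hx.1.2 hx.2⟩
  have h2 : (((range (p-1)) ×ˢ (range (q-1))).filter (fun x => dd f' x.1 x.2 ≠ 0)) ⊆
      (((range (p-1)) ×ˢ (range (q-1))).filter (fun x => dd f x.1 x.2 ≠ 0)) := by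
    intro x hx
    simp only [Finset.mem_filter, Finset.mem_product, Finset.mem_range] at hx ⊢
    exact ⟨hx.1, hdd _ _ (by omega) (by omega) hx.2⟩
  rcases hw with ⟨k, hk, l, hl, hne, hz⟩ | ⟨k, l, hk, hl, hne, hz⟩
  · have : (((range p) ×ˢ (range q)).filter (fun x => f' x.1 x.2 ≠ 0)) ⊂
        (((range p) ×ˢ (range q)).filter (fun x => f x.1 x.2 ≠ 0)) := by
      refine ⟨h1, fun hsub => ?_⟩
      have := hsub (by
        simp only [Finset.mem_filter, Finset.mem_product, Finset.mem_range]
        exact ⟨⟨hk, hl⟩, hne⟩ : ((k,l) : ℕ × ℕ) ∈ _)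
      simp only [Finset.mem_filter] at this
      exact this.2 hz
    exact Nat.add_lt_add_of_lt_of_le (Finset.card_lt_card this) (Finset.card_le_card h2)
  · have : (((range (p-1)) ×ˢ (range (q-1))).filter (fun x => dd f' x.1 x.2 ≠ 0)) ⊂
        (((range (p-1)) ×ˢ (range (q-1))).filter (fun x => dd f x.1 x.2 ≠ 0)) := by
      refine ⟨h2, fun hsub => ?_⟩
      have := hsub (by
        simp only [Finset.mem_filter, Finset.mem_product, Finset.mem_range]
        exact ⟨⟨by omega, by omega⟩, hne⟩ : ((k,l) : ℕ × ℕ) ∈ _)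
      simp only [Finset.mem_filter] at this
      exact this.2 hz
    exact Nat.add_lt_add_of_le_of_lt (Finset.card_le_card h1) (Finset.card_lt_card this)

lemma mu_zero_entries (p q : ℕ) (f : ℕ → ℕ → ℝ)
    (h : ∀ k, k < p → ∀ l, l < q → f k l = 0) : Rep p q f := by
  refine ⟨0, 0, 0, 0, by simp, by simp, by simp, by simp, fun k hk l hl => ?_⟩
  simp [repSum, h k hk l hl]

lemma sum_ite_single {s : Finset ℕ} {i : ℕ} (hi : i ∈ s) (t : ℝ) (X : ℕ → ℝ) :
    ∑ x ∈ s, (if x = i then t else 0) * X x = t * X i := by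
  rw [Finset.sum_eq_single i (fun x _ hx => by simp [hx]) (fun h => (h hi).elim)]
  simp

lemma sum_ite_pair {s u : Finset ℕ} {a b : ℕ} (ha : a ∈ s) (hb : b ∈ u) (t : ℝ)
    (X : ℕ → ℕ → ℝ) :
    ∑ x ∈ s, ∑ y ∈ u, (if x = a ∧ y = b then t else 0) * X x y = t * X a b := by
  rw [Finset.sum_eq_single a (fun x _ hx => by
      apply Finset.sum_eq_zero; intro y _; simp [hx]) (fun h => (h ha).elim)]
  rw [Finset.sum_eq_single b (fun y _ hy => by simp [hy]) (fun h => (h hb).elim)]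
  simp

lemma ite_nonneg {c : Prop} [Decidable c] {t : ℝ} (ht : 0 ≤ t) :
    0 ≤ if c then t else 0 := by split_ifs <;> simp [ht]

lemma rep_add_gNE {p q : ℕ} {f f' : ℕ → ℕ → ℝ} {a b : ℕ} (ha : a ∈ Ico 1 p)
    (hb : b ∈ Ico 1 q) {t : ℝ} (ht : 0 ≤ t) (hrep : Rep p q f')
    (hf : ∀ k, k < p → ∀ l, l < q → f k l = f' k l + t * gNE p q a b k l) :
    Rep p q f := by
  obtain ⟨n, s, h, v, hn, hs, hh, hv, heq⟩ := hrep
  refine ⟨fun x y => n x y + (if x = a ∧ y = b then t else 0), s, h, v,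
    fun x y => add_nonneg (hn x y) (ite_nonneg ht), hs, hh, hv, fun k hk l hl => ?_⟩
  rw [hf k hk l hl, heq k hk l hl]
  simp only [repSum, add_mul, Finset.sum_add_distrib]
  rw [sum_ite_pair ha hb]
  ring

lemma rep_add_gSW {p q : ℕ} {f f' : ℕ → ℕ → ℝ} {a b : ℕ} (ha : a ∈ Ico 1 p)
    (hb : b ∈ Ico 1 q) {t : ℝ} (ht : 0 ≤ t) (hrep : Rep p q f')
    (hf : ∀ k, k < p → ∀ l, l < q → f k l = f' k l + t * gSW p q a b k l) :
    Rep p q f := by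
  obtain ⟨n, s, h, v, hn, hs, hh, hv, heq⟩ := hrep
  refine ⟨n, fun x y => s x y + (if x = a ∧ y = b then t else 0), h, v,
    hn, fun x y => add_nonneg (hs x y) (ite_nonneg ht), hh, hv, fun k hk l hl => ?_⟩
  rw [hf k hk l hl, heq k hk l hl]
  simp only [repSum, add_mul, Finset.sum_add_distrib]
  rw [sum_ite_pair ha hb]
  ring

lemma rep_add_gH {p q : ℕ} {f f' : ℕ → ℕ → ℝ} {i : ℕ} (hi : i ∈ Icc 1 p)
    {t : ℝ} (ht : 0 ≤ t) (hrep : Rep p q f')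
    (hf : ∀ k, k < p → ∀ l, l < q → f k l = f' k l + t * gH i k l) :
    Rep p q f := by
  obtain ⟨n, s, h, v, hn, hs, hh, hv, heq⟩ := hrep
  refine ⟨n, s, fun x => h x + (if x = i then t else 0), v,
    hn, hs, fun x => add_nonneg (hh x) (ite_nonneg ht), hv, fun k hk l hl => ?_⟩
  rw [hf k hk l hl, heq k hk l hl]
  simp only [repSum, add_mul, Finset.sum_add_distrib]
  rw [sum_ite_single hi]
  ring

lemma rep_add_gV {p q : ℕ} {f f' : ℕ → ℕ → ℝ} {j : ℕ} (hj : j ∈ Icc 1 q)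
    {t : ℝ} (ht : 0 ≤ t) (hrep : Rep p q f')
    (hf : ∀ k, k < p → ∀ l, l < q → f k l = f' k l + t * gV j k l) :
    Rep p q f := by
  obtain ⟨n, s, h, v, hn, hs, hh, hv, heq⟩ := hrep
  refine ⟨n, s, h, fun x => v x + (if x = j then t else 0),
    hn, hs, hh, fun x => add_nonneg (hv x) (ite_nonneg ht), fun k hk l hl => ?_⟩
  rw [hf k hk l hl, heq k hk l hl]
  simp only [repSum, add_mul, Finset.sum_add_distrib]
  rw [sum_ite_single hj]
  ring

lemma move_H (p q : ℕ) (f : ℕ → ℕ → ℝ) (hc : Cone p q f) (r : ℕ) (hr : r < p)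
    (hq : 0 < q) (hrow : ∀ l, l < q → 0 < f r l) :
    ∃ f', Cone p q f' ∧ mu p q f' < mu p q f ∧ (Rep p q f' → Rep p q f) := by
  obtain ⟨lm, hlm, hmin⟩ := Finset.exists_min_image (range q) (fun l => f r l)
    ⟨0, by simpa using hq⟩
  simp only [Finset.mem_range] at hlm
  have hminr : ∀ l, l < q → f r lm ≤ f r l := fun l hl => hmin l (by simpa using hl)
  set t := f r lm with htdef
  have ht : 0 < t := hrow lm hlm
  refine ⟨fun k l => f k l - t * gH (r+1) k l, ⟨?_, ?_⟩, ?_, fun hrep => ?_⟩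
  · intro k hk l hl
    show 0 ≤ f k l - t * gH (r+1) k l
    by_cases hkr : k = r
    · subst hkr
      have hg : gH (k+1) k l = 1 := by simp [gH]
      rw [hg]
      have := hminr l hl
      linarith
    · simp only [gH, if_neg (by omega : ¬ k + 1 = r + 1)]
      have := hc.1 k hk l hl
      linarith
  · intro k l hk hl
    rw [dd_sub_smul, dd_gH]
    have := hc.2 k l hk hl
    linarith
  · apply mu_lt
    · intro k hk l hl hne
      replace hne : f k l - t * gH (r+1) k l ≠ 0 := hne
      by_cases hkr : k = r
      · subst hkr; exact ne_of_gt (hrow l hl)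
      · simp only [gH, if_neg (by omega : ¬ k + 1 = r + 1)] at hne
        intro h0; apply hne; rw [h0]; ring
    · intro k l hk hl hne
      rw [dd_sub_smul, dd_gH] at hne
      intro h0; apply hne; rw [h0]; ring
    · left
      refine ⟨r, hr, lm, hlm, ne_of_gt ht, ?_⟩
      show f r lm - t * gH (r+1) r lm = 0
      simp [gH, htdef]
  · exact rep_add_gH (i := r+1) (by simp only [Finset.mem_Icc]; omega) (le_of_lt ht) hrep (fun k _ l _ => by ring)

lemma move_V (p q : ℕ) (f : ℕ → ℕ → ℝ) (hc : Cone p q f) (c : ℕ) (hcq : c < q)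
    (hp : 0 < p) (hcol : ∀ k, k < p → 0 < f k c) :
    ∃ f', Cone p q f' ∧ mu p q f' < mu p q f ∧ (Rep p q f' → Rep p q f) := by
  obtain ⟨km, hkm, hmin⟩ := Finset.exists_min_image (range p) (fun k => f k c)
    ⟨0, by simpa using hp⟩
  simp only [Finset.mem_range] at hkm
  have hminr : ∀ k, k < p → f km c ≤ f k c := fun k hk => hmin k (by simpa using hk)
  set t := f km c with htdef
  have ht : 0 < t := hcol km hkm
  refine ⟨fun k l => f k l - t * gV (c+1) k l, ⟨?_, ?_⟩, ?_, fun hrep => ?_⟩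
  · intro k hk l hl
    show 0 ≤ f k l - t * gV (c+1) k l
    by_cases hlc : l = c
    · have hg : gV (c+1) k l = 1 := by simp [gV, hlc]
      rw [hg, hlc]
      have := hminr k hk
      linarith
    · simp only [gV, if_neg (by omega : ¬ l + 1 = c + 1)]
      have := hc.1 k hk l hl
      linarith
  · intro k l hk hl
    rw [dd_sub_smul, dd_gV]
    have := hc.2 k l hk hl
    linarith
  · apply mu_lt
    · intro k hk l hl hne
      replace hne : f k l - t * gV (c+1) k l ≠ 0 := hne
      by_cases hlc : l = c
      · subst hlc; exact ne_of_gt (hcol k hk)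
      · simp only [gV, if_neg (by omega : ¬ l + 1 = c + 1)] at hne
        intro h0; apply hne; rw [h0]; ring
    · intro k l hk hl hne
      rw [dd_sub_smul, dd_gV] at hne
      intro h0; apply hne; rw [h0]; ring
    · left
      refine ⟨km, hkm, c, hcq, ne_of_gt ht, ?_⟩
      show f km c - t * gV (c+1) km c = 0
      simp [gV, htdef]
  · exact rep_add_gV (j := c+1) (by simp only [Finset.mem_Icc]; omega)
      (le_of_lt ht) hrep (fun k _ l _ => by ring)

lemma move_NE (p q : ℕ) (f : ℕ → ℕ → ℝ) (hc : Cone p q f) (k0 l0 : ℕ)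
    (hk0 : k0 + 1 < p) (hl0 : l0 + 1 < q) (hdpos : 0 < dd f k0 l0)
    (hpos : ∀ k, k ≤ k0 → ∀ l, l0 < l → l < q → 0 < f k l) :
    ∃ f', Cone p q f' ∧ mu p q f' < mu p q f ∧ (Rep p q f' → Rep p q f) := by
  set a := k0 + 1 with hadef
  set b := q - 1 - l0 with hbdef
  have hqb : q - b = l0 + 1 := by omega
  have hsupp : ∀ k l, gNE p q a b k l = if k ≤ k0 ∧ l0 < l then 1 else 0 := by
    intro k l
    simp only [gNE]
    exact if_congr (by omega) rfl rfl
  have hddg : ∀ k l, dd (gNE p q a b) k l = if k = k0 ∧ l = l0 then 1 else 0 := by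
    intro k l
    rw [dd_gNE]
    exact if_congr (by omega) rfl rfl
  obtain ⟨w, hwmem, hwmin⟩ := Finset.exists_min_image
    ((range (k0+1)) ×ˢ (Ico (l0+1) q)) (fun x => f x.1 x.2)
    ⟨(0, l0+1), by simp only [Finset.mem_product, Finset.mem_range, Finset.mem_Ico]; omega⟩
  simp only [Finset.mem_product, Finset.mem_range, Finset.mem_Ico] at hwmem
  have hwpos : 0 < f w.1 w.2 := hpos w.1 (by omega) w.2 (by omega) (by omega)
  have hminr : ∀ k, k ≤ k0 → ∀ l, l0 < l → l < q → f w.1 w.2 ≤ f k l := by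
    intro k hk l hl1 hl2
    exact hwmin (k, l) (by simp only [Finset.mem_product, Finset.mem_range, Finset.mem_Ico]; omega)
  set t := min (f w.1 w.2) (dd f k0 l0) with htdef
  have ht : 0 < t := lt_min hwpos hdpos
  have htf : ∀ k, k ≤ k0 → ∀ l, l0 < l → l < q → t ≤ f k l :=
    fun k hk l hl1 hl2 => le_trans (min_le_left _ _) (hminr k hk l hl1 hl2)
  have htd : t ≤ dd f k0 l0 := min_le_right _ _
  refine ⟨fun k l => f k l - t * gNE p q a b k l, ⟨?_, ?_⟩, ?_, fun hrep => ?_⟩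
  · intro k hk l hl
    show 0 ≤ f k l - t * gNE p q a b k l
    rw [hsupp]
    by_cases hin : k ≤ k0 ∧ l0 < l
    · rw [if_pos hin]
      have := htf k hin.1 l hin.2 hl
      linarith
    · rw [if_neg hin]
      have := hc.1 k hk l hl
      linarith
  · intro k l hk hl
    rw [dd_sub_smul, hddg]
    by_cases hin : k = k0 ∧ l = l0
    · rw [if_pos hin, hin.1, hin.2]
      linarith
    · rw [if_neg hin]
      have := hc.2 k l hk hl
      linarith
  · apply mu_lt
    · intro k hk l hl hne
      replace hne : f k l - t * gNE p q a b k l ≠ 0 := hne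
      rw [hsupp] at hne
      by_cases hin : k ≤ k0 ∧ l0 < l
      · exact ne_of_gt (hpos k hin.1 l hin.2 hl)
      · rw [if_neg hin] at hne
        intro h0; apply hne; rw [h0]; ring
    · intro k l hk hl hne
      rw [dd_sub_smul, hddg] at hne
      by_cases hin : k = k0 ∧ l = l0
      · rw [hin.1, hin.2]
        exact ne_of_gt hdpos
      · rw [if_neg hin] at hne
        intro h0; apply hne; rw [h0]; ring
    · rcases le_total (f w.1 w.2) (dd f k0 l0) with hmc | hmc
      · left
        refine ⟨w.1, by omega, w.2, by omega, ne_of_gt hwpos, ?_⟩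
        show f w.1 w.2 - t * gNE p q a b w.1 w.2 = 0
        rw [hsupp, if_pos (by omega : w.1 ≤ k0 ∧ l0 < w.2)]
        have : t = f w.1 w.2 := by rw [htdef, min_eq_left hmc]
        rw [this]; ring
      · right
        refine ⟨k0, l0, hk0, hl0, ne_of_gt hdpos, ?_⟩
        rw [dd_sub_smul, hddg, if_pos ⟨rfl, rfl⟩]
        have : t = dd f k0 l0 := by rw [htdef, min_eq_right hmc]
        rw [this]; ring
  · refine rep_add_gNE (a := a) (b := b) (by simp only [Finset.mem_Ico]; omega)
      (by simp only [Finset.mem_Ico]; omega) (le_of_lt ht) hrep (fun k _ l _ => by ring)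

lemma move_SW (p q : ℕ) (f : ℕ → ℕ → ℝ) (hc : Cone p q f) (k0 l0 : ℕ)
    (hk0 : k0 + 1 < p) (hl0 : l0 + 1 < q) (hdpos : 0 < dd f k0 l0)
    (hpos : ∀ k, k0 < k → k < p → ∀ l, l ≤ l0 → 0 < f k l) :
    ∃ f', Cone p q f' ∧ mu p q f' < mu p q f ∧ (Rep p q f' → Rep p q f) := by
  set a := p - 1 - k0 with hadef
  set b := l0 + 1 with hbdef
  have hpa : p - a = k0 + 1 := by omega
  have hsupp : ∀ k l, gSW p q a b k l = if k0 < k ∧ l ≤ l0 then 1 else 0 := by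
    intro k l
    simp only [gSW]
    exact if_congr (by omega) rfl rfl
  have hddg : ∀ k l, dd (gSW p q a b) k l = if k = k0 ∧ l = l0 then 1 else 0 := by
    intro k l
    rw [dd_gSW]
    exact if_congr (by omega) rfl rfl
  obtain ⟨w, hwmem, hwmin⟩ := Finset.exists_min_image
    ((Ico (k0+1) p) ×ˢ (range (l0+1))) (fun x => f x.1 x.2)
    ⟨(k0+1, 0), by simp only [Finset.mem_product, Finset.mem_range, Finset.mem_Ico]; omega⟩
  simp only [Finset.mem_product, Finset.mem_range, Finset.mem_Ico] at hwmem
  have hwpos : 0 < f w.1 w.2 := hpos w.1 (by omega) (by omega) w.2 (by omega)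
  have hminr : ∀ k, k0 < k → k < p → ∀ l, l ≤ l0 → f w.1 w.2 ≤ f k l := by
    intro k hk1 hk2 l hl
    exact hwmin (k, l) (by simp only [Finset.mem_product, Finset.mem_range, Finset.mem_Ico]; omega)
  set t := min (f w.1 w.2) (dd f k0 l0) with htdef
  have ht : 0 < t := lt_min hwpos hdpos
  have htf : ∀ k, k0 < k → k < p → ∀ l, l ≤ l0 → t ≤ f k l :=
    fun k hk1 hk2 l hl => le_trans (min_le_left _ _) (hminr k hk1 hk2 l hl)
  have htd : t ≤ dd f k0 l0 := min_le_right _ _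
  refine ⟨fun k l => f k l - t * gSW p q a b k l, ⟨?_, ?_⟩, ?_, fun hrep => ?_⟩
  · intro k hk l hl
    show 0 ≤ f k l - t * gSW p q a b k l
    rw [hsupp]
    by_cases hin : k0 < k ∧ l ≤ l0
    · rw [if_pos hin]
      have := htf k hin.1 hk l hin.2
      linarith
    · rw [if_neg hin]
      have := hc.1 k hk l hl
      linarith
  · intro k l hk hl
    rw [dd_sub_smul, hddg]
    by_cases hin : k = k0 ∧ l = l0
    · rw [if_pos hin, hin.1, hin.2]
      linarith
    · rw [if_neg hin]
      have := hc.2 k l hk hl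
      linarith
  · apply mu_lt
    · intro k hk l hl hne
      replace hne : f k l - t * gSW p q a b k l ≠ 0 := hne
      rw [hsupp] at hne
      by_cases hin : k0 < k ∧ l ≤ l0
      · exact ne_of_gt (hpos k hin.1 hk l hin.2)
      · rw [if_neg hin] at hne
        intro h0; apply hne; rw [h0]; ring
    · intro k l hk hl hne
      rw [dd_sub_smul, hddg] at hne
      by_cases hin : k = k0 ∧ l = l0
      · rw [hin.1, hin.2]
        exact ne_of_gt hdpos
      · rw [if_neg hin] at hne
        intro h0; apply hne; rw [h0]; ring
    · rcases le_total (f w.1 w.2) (dd f k0 l0) with hmc | hmc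
      · left
        refine ⟨w.1, by omega, w.2, by omega, ne_of_gt hwpos, ?_⟩
        show f w.1 w.2 - t * gSW p q a b w.1 w.2 = 0
        rw [hsupp, if_pos (by omega : k0 < w.1 ∧ w.2 ≤ l0)]
        have : t = f w.1 w.2 := by rw [htdef, min_eq_left hmc]
        rw [this]; ring
      · right
        refine ⟨k0, l0, hk0, hl0, ne_of_gt hdpos, ?_⟩
        rw [dd_sub_smul, hddg, if_pos ⟨rfl, rfl⟩]
        have : t = dd f k0 l0 := by rw [htdef, min_eq_right hmc]
        rw [this]; ring
  · refine rep_add_gSW (a := a) (b := b) (by simp only [Finset.mem_Ico]; omega)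
      (by simp only [Finset.mem_Ico]; omega) (le_of_lt ht) hrep (fun k _ l _ => by ring)

theorem cone_rep (p q : ℕ) (f : ℕ → ℕ → ℝ) (hc : Cone p q f) : Rep p q f := by
  suffices H : ∀ N (f : ℕ → ℕ → ℝ), Cone p q f → mu p q f ≤ N → Rep p q f from
    H (mu p q f) f hc le_rfl
  intro N
  induction N using Nat.strong_induction_on with
  | _ N ih =>
  intro f hc hmu
  by_cases hzero : ∀ k, k < p → ∀ l, l < q → f k l = 0
  · exact mu_zero_entries p q f hzero
  push_neg at hzero
  obtain ⟨kh, hkh, lh, hlh, hfne⟩ := hzero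
  have hp : 0 < p := by omega
  have hq : 0 < q := by omega
  have step : ∃ f', Cone p q f' ∧ mu p q f' < mu p q f ∧ (Rep p q f' → Rep p q f) := by
    by_cases hD : ∃ k l, k + 1 < p ∧ l + 1 < q ∧ dd f k l ≠ 0
    · obtain ⟨k0, l0, hk0, hl0, hdne⟩ := hD
      have hdpos : 0 < dd f k0 l0 := lt_of_le_of_ne (hc.2 k0 l0 hk0 hl0) (Ne.symm hdne)
      have hdich : (∀ k, k ≤ k0 → ∀ l, l0 < l → l < q → 0 < f k l) ∨
          (∀ k, k0 < k → k < p → ∀ l, l ≤ l0 → 0 < f k l) := by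
        by_contra hcon
        push_neg at hcon
        obtain ⟨⟨k1, hk1, l1, hl11, hl12, hf1⟩, ⟨k2, hk21, hk22, l2, hl2, hf2⟩⟩ := hcon
        have hz1 : f k1 l1 = 0 := le_antisymm hf1 (hc.1 k1 (by omega) l1 (by omega))
        have hz2 : f k2 l2 = 0 := le_antisymm hf2 (hc.1 k2 (by omega) l2 (by omega))
        have hsum := sum_dd f (show k1 ≤ k2 by omega) (show l2 ≤ l1 by omega)
        have hnn : ∀ k ∈ Ico k1 k2, ∀ l ∈ Ico l2 l1, 0 ≤ dd f k l := by
          intro k hk l hl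
          simp only [Finset.mem_Ico] at hk hl
          exact hc.2 k l (by omega) (by omega)
        have hk0mem : k0 ∈ Ico k1 k2 := by simp only [Finset.mem_Ico]; omega
        have hl0mem : l0 ∈ Ico l2 l1 := by simp only [Finset.mem_Ico]; omega
        have h1 : dd f k0 l0 ≤ ∑ l ∈ Ico l2 l1, dd f k0 l :=
          Finset.single_le_sum (fun l hl => hnn k0 hk0mem l hl) hl0mem
        have h2 : ∑ l ∈ Ico l2 l1, dd f k0 l ≤ ∑ k ∈ Ico k1 k2, ∑ l ∈ Ico l2 l1, dd f k l :=
          Finset.single_le_sum (fun k hk => Finset.sum_nonneg (hnn k hk)) hk0mem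
        have n3 : 0 ≤ f k1 l2 := hc.1 k1 (by omega) l2 (by omega)
        have n4 : 0 ≤ f k2 l1 := hc.1 k2 (by omega) l1 (by omega)
        linarith
      rcases hdich with h | h
      · exact move_NE p q f hc k0 l0 hk0 hl0 hdpos h
      · exact move_SW p q f hc k0 l0 hk0 hl0 hdpos h
    · push_neg at hD
      have hadd : ∀ k, k < p → ∀ l, l < q → f k l + f 0 0 = f k 0 + f 0 l := by
        intro k hk l hl
        have hsum := sum_dd f (Nat.zero_le k) (Nat.zero_le l)
        have hzsum : ∑ k' ∈ Ico 0 k, ∑ l' ∈ Ico 0 l, dd f k' l' = 0 := by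
          apply Finset.sum_eq_zero
          intro k' hk'
          apply Finset.sum_eq_zero
          intro l' hl'
          simp only [Finset.mem_Ico] at hk' hl'
          exact hD k' l' (by omega) (by omega)
        rw [hzsum] at hsum
        linarith
      obtain ⟨ks, hks, hmaxk⟩ := Finset.exists_max_image (range p) (fun k => f k 0)
        ⟨0, by simpa using hp⟩
      obtain ⟨ls, hls, hmaxl⟩ := Finset.exists_max_image (range q) (fun l => f 0 l)
        ⟨0, by simpa using hq⟩
      simp only [Finset.mem_range] at hks hls
      by_cases hrow : ∀ l, l < q → 0 < f ks l
      · exact move_H p q f hc ks hks hq hrow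
      push_neg at hrow
      obtain ⟨lz, hlz, hfz⟩ := hrow
      have hz1 : f ks lz = 0 := le_antisymm hfz (hc.1 ks hks lz hlz)
      by_cases hcol : ∀ k, k < p → 0 < f k ls
      · exact move_V p q f hc ls hls hp hcol
      push_neg at hcol
      obtain ⟨kz, hkz, hfz2⟩ := hcol
      have hz2 : f kz ls = 0 := le_antisymm hfz2 (hc.1 kz hkz ls hls)
      exfalso
      apply hfne
      have e1 := hadd ks hks lz hlz
      have e2 := hadd kz hkz ls hls
      have e3 := hadd kh hkh lh hlh
      have e4 := hadd kz hkz lz hlz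
      have m1 : f kh 0 ≤ f ks 0 := hmaxk kh (by simpa using hkh)
      have m2 : f 0 lh ≤ f 0 ls := hmaxl lh (by simpa using hlh)
      have n1 : 0 ≤ f kz lz := hc.1 kz hkz lz hlz
      have n2 : 0 ≤ f kh lh := hc.1 kh hkh lh hlh
      linarith
  obtain ⟨f', hc', hlt, himp⟩ := step
  exact himp (ih (N-1) (by omega) f' hc' (by omega))

lemma sum_ite_count {n m c : ℕ} (P : ℕ → Prop) [DecidablePred P]
    (h : ∀ k, k < n → (P k ↔ (m ≤ k ∧ k < m + c))) (hc : m + c ≤ n) :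
    ∑ k ∈ range n, (if P k then (1:ℝ) else 0) = c := by
  rw [Finset.sum_boole]
  norm_cast
  rw [show (range n).filter P = Ico m (m + c) from by
    ext k
    simp only [Finset.mem_filter, Finset.mem_range, Finset.mem_Ico]
    constructor
    · rintro ⟨hk, hP⟩; exact (h k hk).1 hP
    · intro hk; exact ⟨by omega, (h k (by omega)).2 hk⟩]
  rw [Nat.card_Ico]
  omega

lemma ite_and_mul (c1 c2 : Prop) [Decidable c1] [Decidable c2] :
    (if c1 ∧ c2 then (1:ℝ) else 0) = (if c1 then (1:ℝ) else 0) * (if c2 then (1:ℝ) else 0) := by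
  split_ifs <;> simp_all

lemma sum_gNE {p q a b : ℕ} (ha : 1 ≤ a) (hap : a ≤ p) (hb : 1 ≤ b) (hbq : b ≤ q) :
    ∑ k ∈ range p, ∑ l ∈ range q, gNE p q a b k l = (a:ℝ) * b := by
  unfold gNE
  simp_rw [ite_and_mul]
  rw [← Finset.sum_mul_sum]
  rw [sum_ite_count (m := 0) (c := a) _ (fun k hk => by omega) (by omega),
    sum_ite_count (m := q - b) (c := b) _ (fun l hl => by omega) (by omega)]

lemma sum_gSW {p q a b : ℕ} (ha : 1 ≤ a) (hap : a ≤ p) (hb : 1 ≤ b) (hbq : b ≤ q) :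
    ∑ k ∈ range p, ∑ l ∈ range q, gSW p q a b k l = (a:ℝ) * b := by
  unfold gSW
  simp_rw [ite_and_mul]
  rw [← Finset.sum_mul_sum]
  rw [sum_ite_count (m := p - a) (c := a) _ (fun k hk => by omega) (by omega),
    sum_ite_count (m := 0) (c := b) _ (fun l hl => by omega) (by omega)]

lemma sum_gH {p q i : ℕ} (hi : 1 ≤ i) (hip : i ≤ p) :
    ∑ k ∈ range p, ∑ l ∈ range q, gH i k l = (q:ℝ) := by
  unfold gH
  calc ∑ k ∈ range p, ∑ l ∈ range q, (if k + 1 = i then (1:ℝ) else 0)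
      = ∑ k ∈ range p, (q:ℝ) * (if k + 1 = i then (1:ℝ) else 0) := by
        apply Finset.sum_congr rfl
        intro k _
        rw [Finset.sum_const, card_range, nsmul_eq_mul]
    _ = (q:ℝ) * ∑ k ∈ range p, (if k + 1 = i then (1:ℝ) else 0) := by rw [Finset.mul_sum]
    _ = (q:ℝ) := by
        rw [sum_ite_count (m := i - 1) (c := 1) _ (fun k hk => by omega) (by omega)]
        simp

lemma sum_gV {p q j : ℕ} (hj : 1 ≤ j) (hjq : j ≤ q) :
    ∑ k ∈ range p, ∑ l ∈ range q, gV j k l = (p:ℝ) := by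
  unfold gV
  calc ∑ k ∈ range p, ∑ l ∈ range q, (if l + 1 = j then (1:ℝ) else 0)
      = ∑ k ∈ range p, (1:ℝ) := by
        apply Finset.sum_congr rfl
        intro k _
        rw [sum_ite_count (m := j - 1) (c := 1) _ (fun l hl => by omega) (by omega)]
        simp
    _ = (p:ℝ) := by rw [Finset.sum_const, card_range, nsmul_eq_mul, mul_one]

variable {p q : ℕ}

noncomputable def fm (C : Matrix (Fin p) (Fin q) ℝ) : ℕ → ℕ → ℝ :=
  fun k l => if h : k < p ∧ l < q then C ⟨k, h.1⟩ ⟨l, h.2⟩ else 0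

lemma fm_eq (C : Matrix (Fin p) (Fin q) ℝ) {k l : ℕ} (hk : k < p) (hl : l < q) :
    fm C k l = C ⟨k, hk⟩ ⟨l, hl⟩ := dif_pos ⟨hk, hl⟩

lemma fm_apply (C : Matrix (Fin p) (Fin q) ℝ) (ki : Fin p) (li : Fin q) :
    fm C ki.val li.val = C ki li := by
  rw [fm_eq C ki.isLt li.isLt]

lemma fm_smul (C : Matrix (Fin p) (Fin q) ℝ) (c : ℝ) (k l : ℕ) :
    fm (c • C) k l = c * fm C k l := by
  unfold fm
  split_ifs with h
  · simp [Matrix.smul_apply]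
  · simp

lemma fm_NE (a b : ℕ) {k l : ℕ} (hk : k < p) (hl : l < q) :
    fm (NE p q a b) k l = gNE p q a b k l := by
  rw [fm_eq _ hk hl]; rfl

lemma fm_SW (a b : ℕ) {k l : ℕ} (hk : k < p) (hl : l < q) :
    fm (SW p q a b) k l = gSW p q a b k l := by
  rw [fm_eq _ hk hl]; rfl

lemma fm_HOR (i : ℕ) {k l : ℕ} (hk : k < p) (hl : l < q) :
    fm (HOR p q i) k l = gH i k l := by
  rw [fm_eq _ hk hl]; rfl

lemma fm_VER (j : ℕ) {k l : ℕ} (hk : k < p) (hl : l < q) :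
    fm (VER p q j) k l = gV j k l := by
  rw [fm_eq _ hk hl]; rfl

lemma dd_congr {f g : ℕ → ℕ → ℝ} {k l : ℕ} (hk : k + 1 < p) (hl : l + 1 < q)
    (hagree : ∀ k' l', k' < p → l' < q → f k' l' = g k' l') :
    dd f k l = dd g k l := by
  unfold dd
  rw [hagree k (l+1) (by omega) (by omega), hagree (k+1) l (by omega) (by omega),
    hagree k l (by omega) (by omega), hagree (k+1) (l+1) (by omega) (by omega)]

lemma dd_fm_monge {C : Matrix (Fin p) (Fin q) ℝ} (hM : IsMonge C)
    {k l : ℕ} (hk : k + 1 < p) (hl : l + 1 < q) : 0 ≤ dd (fm C) k l := by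
  unfold dd
  rw [fm_eq C (show k < p by omega) (show l + 1 < q from hl),
    fm_eq C (show k + 1 < p from hk) (show l < q by omega),
    fm_eq C (show k < p by omega) (show l < q by omega),
    fm_eq C (show k + 1 < p from hk) (show l + 1 < q from hl)]
  have := hM ⟨k, by omega⟩ ⟨k+1, hk⟩ ⟨l, by omega⟩ ⟨l+1, hl⟩
    (by simp [Fin.lt_def]) (by simp [Fin.lt_def])
  linarith

lemma isMonge_of_dd {C : Matrix (Fin p) (Fin q) ℝ}
    (h : ∀ k l, k + 1 < p → l + 1 < q → 0 ≤ dd (fm C) k l) : IsMonge C := by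
  intro i I j J hiI hjJ
  have hsum := sum_dd (fm C) (le_of_lt (show i.val < I.val from hiI))
    (le_of_lt (show j.val < J.val from hjJ))
  have hnn : 0 ≤ ∑ k ∈ Ico i.val I.val, ∑ l ∈ Ico j.val J.val, dd (fm C) k l := by
    apply Finset.sum_nonneg
    intro k hk
    apply Finset.sum_nonneg
    intro l hl
    simp only [Finset.mem_Ico] at hk hl
    exact h k l (by omega) (by omega)
  rw [hsum] at hnn
  rw [fm_apply, fm_apply, fm_apply, fm_apply] at hnn
  linarith


lemma dd_repSum (p q : ℕ) (n s : ℕ → ℕ → ℝ) (h v : ℕ → ℝ) (k l : ℕ) :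
    dd (repSum p q n s h v) k l
      = (∑ a ∈ Ico 1 p, ∑ b ∈ Ico 1 q, n a b * dd (gNE p q a b) k l)
      + (∑ a ∈ Ico 1 p, ∑ b ∈ Ico 1 q, s a b * dd (gSW p q a b) k l) := by
  have e1 : dd (repSum p q n s h v) k l
      = dd (fun k l => ∑ a ∈ Ico 1 p, ∑ b ∈ Ico 1 q, n a b * gNE p q a b k l) k l
      + dd (fun k l => ∑ a ∈ Ico 1 p, ∑ b ∈ Ico 1 q, s a b * gSW p q a b k l) k l
      + dd (fun k l => ∑ i ∈ Icc 1 p, h i * gH i k l) k l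
      + dd (fun k l => ∑ j ∈ Icc 1 q, v j * gV j k l) k l := by
    simp only [dd, repSum]; ring
  rw [e1]
  have eNE : dd (fun k l => ∑ a ∈ Ico 1 p, ∑ b ∈ Ico 1 q, n a b * gNE p q a b k l) k l
      = ∑ a ∈ Ico 1 p, ∑ b ∈ Ico 1 q, n a b * dd (gNE p q a b) k l := by
    rw [dd_sum]
    refine Finset.sum_congr rfl (fun a _ => ?_)
    rw [dd_sum]
    exact Finset.sum_congr rfl (fun b _ => dd_smul (gNE p q a b) (n a b) k l)
  have eSW : dd (fun k l => ∑ a ∈ Ico 1 p, ∑ b ∈ Ico 1 q, s a b * gSW p q a b k l) k l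
      = ∑ a ∈ Ico 1 p, ∑ b ∈ Ico 1 q, s a b * dd (gSW p q a b) k l := by
    rw [dd_sum]
    refine Finset.sum_congr rfl (fun a _ => ?_)
    rw [dd_sum]
    exact Finset.sum_congr rfl (fun b _ => dd_smul (gSW p q a b) (s a b) k l)
  have eH : dd (fun k l => ∑ i ∈ Icc 1 p, h i * gH i k l) k l = 0 := by
    rw [dd_sum]
    apply Finset.sum_eq_zero
    intro i _
    rw [dd_smul, dd_gH, mul_zero]
  have eV : dd (fun k l => ∑ j ∈ Icc 1 q, v j * gV j k l) k l = 0 := by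
    rw [dd_sum]
    apply Finset.sum_eq_zero
    intro j _
    rw [dd_smul, dd_gV, mul_zero]
  rw [eNE, eSW, eH, eV]
  ring

lemma dd_repSum_cell (p q i j : ℕ) (hi1 : 1 ≤ i) (hip : i < p) (hj1 : 1 ≤ j) (hjq : j < q)
    (n s : ℕ → ℕ → ℝ) (h v : ℕ → ℝ) :
    dd (repSum p q n s h v) (i-1) (j-1) = n i (q-j) + s (p-i) j := by
  rw [dd_repSum]
  have h1 : ∑ a ∈ Ico 1 p, ∑ b ∈ Ico 1 q, n a b * dd (gNE p q a b) (i-1) (j-1)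
      = n i (q-j) := by
    rw [Finset.sum_congr rfl (fun a _ => Finset.sum_congr rfl
      (fun b _ => by rw [dd_gNE (p := p)]))]
    exact sum_mul_indicator_pair (by simp only [Finset.mem_Ico]; omega)
      (by simp only [Finset.mem_Ico]; omega) n _
      (fun a ha b hb => by simp only [Finset.mem_Ico] at ha hb; omega)
  have h2 : ∑ a ∈ Ico 1 p, ∑ b ∈ Ico 1 q, s a b * dd (gSW p q a b) (i-1) (j-1)
      = s (p-i) j := by
    rw [Finset.sum_congr rfl (fun a _ => Finset.sum_congr rfl
      (fun b _ => by rw [dd_gSW (q := q)]))]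
    exact sum_mul_indicator_pair (by simp only [Finset.mem_Ico]; omega)
      (by simp only [Finset.mem_Ico]; omega) s _
      (fun a ha b hb => by simp only [Finset.mem_Ico] at ha hb; omega)
  rw [h1, h2]

lemma dd_fm_smul (M : Matrix (Fin p) (Fin q) ℝ) (c : ℝ) (k l : ℕ) :
    dd (fm (c • M)) k l = c * dd (fm M) k l := by
  unfold dd
  rw [fm_smul, fm_smul, fm_smul, fm_smul]
  ring

lemma dd_fm_NE (a b : ℕ) {k l : ℕ} (hk : k + 1 < p) (hl : l + 1 < q) :
    dd (fm (NE p q a b)) k l = dd (gNE p q a b) k l :=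
  dd_congr hk hl (fun k' l' hk' hl' => fm_NE a b hk' hl')

lemma dd_fm_SW (a b : ℕ) {k l : ℕ} (hk : k + 1 < p) (hl : l + 1 < q) :
    dd (fm (SW p q a b)) k l = dd (gSW p q a b) k l :=
  dd_congr hk hl (fun k' l' hk' hl' => fm_SW a b hk' hl')

lemma dd_fm_HOR (i : ℕ) {k l : ℕ} (hk : k + 1 < p) (hl : l + 1 < q) :
    dd (fm (HOR p q i)) k l = 0 := by
  rw [dd_congr hk hl (fun k' l' hk' hl' => fm_HOR i hk' hl'), dd_gH]

lemma dd_fm_VER (j : ℕ) {k l : ℕ} (hk : k + 1 < p) (hl : l + 1 < q) :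
    dd (fm (VER p q j)) k l = 0 := by
  rw [dd_congr hk hl (fun k' l' hk' hl' => fm_VER j hk' hl'), dd_gV]

lemma dd_fm_cell (C : Matrix (Fin p) (Fin q) ℝ) {i j : ℕ}
    (hi1 : 1 ≤ i) (hip : i < p) (hj1 : 1 ≤ j) (hjq : j < q) :
    dd (fm C) (i-1) (j-1)
      = C ⟨i-1, by have := C; omega⟩ ⟨j, by have := C; omega⟩ + C ⟨i, by have := C; omega⟩ ⟨j-1, by have := C; omega⟩
      - C ⟨i-1, by have := C; omega⟩ ⟨j-1, by have := C; omega⟩ - C ⟨i, by have := C; omega⟩ ⟨j, by have := C; omega⟩  := by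
  unfold dd
  rw [show (j-1)+1 = j from by omega, show (i-1)+1 = i from by omega,
    fm_eq C (show i-1 < p by omega) (show j < q from hjq),
    fm_eq C (show i < p from hip) (show j-1 < q by omega),
    fm_eq C (show i-1 < p by omega) (show j-1 < q by omega),
    fm_eq C (show i < p from hip) (show j < q from hjq)]

lemma sum_entries_fm (M : Matrix (Fin p) (Fin q) ℝ) :
    ∑ ki : Fin p, ∑ li : Fin q, M ki li
      = ∑ k ∈ range p, ∑ l ∈ range q, fm M k l := by
  rw [← Fin.sum_univ_eq_sum_range (fun k => ∑ l ∈ range q, fm M k l) p]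
  apply Finset.sum_congr rfl
  intro ki _
  rw [← Fin.sum_univ_eq_sum_range (fun l => fm M ki.val l) q]
  exact Finset.sum_congr rfl (fun li _ => (fm_apply M ki li).symm)

lemma sum_fm_smul (M : Matrix (Fin p) (Fin q) ℝ) (c : ℝ) :
    ∑ k ∈ range p, ∑ l ∈ range q, fm (c • M) k l
      = c * ∑ k ∈ range p, ∑ l ∈ range q, fm M k l := by
  rw [Finset.mul_sum]
  apply Finset.sum_congr rfl
  intro k _
  rw [Finset.mul_sum]
  exact Finset.sum_congr rfl (fun l _ => fm_smul M c k l)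

lemma sum_entries_NE {a b : ℕ} (ha1 : 1 ≤ a) (hap : a < p) (hb1 : 1 ≤ b) (hbq : b < q) :
    ∑ ki : Fin p, ∑ li : Fin q, ((1/((a:ℝ) * (b:ℝ))) • NE p q a b) ki li = 1 := by
  rw [sum_entries_fm, sum_fm_smul]
  rw [Finset.sum_congr rfl (fun k hk => Finset.sum_congr rfl (fun l hl => by
    rw [fm_NE a b (Finset.mem_range.mp hk) (Finset.mem_range.mp hl)]))]
  rw [sum_gNE ha1 (by omega) hb1 (by omega)]
  rw [one_div, inv_mul_cancel₀]
  positivity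

lemma sum_entries_SW {a b : ℕ} (ha1 : 1 ≤ a) (hap : a < p) (hb1 : 1 ≤ b) (hbq : b < q) :
    ∑ ki : Fin p, ∑ li : Fin q, ((1/((a:ℝ) * (b:ℝ))) • SW p q a b) ki li = 1 := by
  rw [sum_entries_fm, sum_fm_smul]
  rw [Finset.sum_congr rfl (fun k hk => Finset.sum_congr rfl (fun l hl => by
    rw [fm_SW a b (Finset.mem_range.mp hk) (Finset.mem_range.mp hl)]))]
  rw [sum_gSW ha1 (by omega) hb1 (by omega)]
  rw [one_div, inv_mul_cancel₀]
  positivity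

lemma sum_entries_HOR {i : ℕ} (hi1 : 1 ≤ i) (hip : i ≤ p) (hq : 1 ≤ q) :
    ∑ ki : Fin p, ∑ li : Fin q, ((1/(q:ℝ)) • HOR p q i) ki li = 1 := by
  rw [sum_entries_fm, sum_fm_smul]
  rw [Finset.sum_congr rfl (fun k hk => Finset.sum_congr rfl (fun l hl => by
    rw [fm_HOR i (Finset.mem_range.mp hk) (Finset.mem_range.mp hl)]))]
  rw [sum_gH hi1 hip]
  rw [one_div, inv_mul_cancel₀]
  positivity

lemma sum_entries_VER {j : ℕ} (hj1 : 1 ≤ j) (hjq : j ≤ q) (hp : 1 ≤ p) :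
    ∑ ki : Fin p, ∑ li : Fin q, ((1/(p:ℝ)) • VER p q j) ki li = 1 := by
  rw [sum_entries_fm, sum_fm_smul]
  rw [Finset.sum_congr rfl (fun k hk => Finset.sum_congr rfl (fun l hl => by
    rw [fm_VER j (Finset.mem_range.mp hk) (Finset.mem_range.mp hl)]))]
  rw [sum_gV hj1 hjq]
  rw [one_div, inv_mul_cancel₀]
  positivity

lemma vNE_mem_Mpq {a b : ℕ} (ha1 : 1 ≤ a) (hap : a < p) (hb1 : 1 ≤ b) (hbq : b < q) :
    (1/((a:ℝ) * (b:ℝ))) • NE p q a b ∈ Mpq p q := by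
  refine ⟨fun ki li => ?_, sum_entries_NE ha1 hap hb1 hbq, ?_⟩
  · have : ((1/((a:ℝ) * (b:ℝ))) • NE p q a b) ki li
        = (1/((a:ℝ) * (b:ℝ))) * gNE p q a b ki.val li.val := rfl
    rw [this]
    apply mul_nonneg (by positivity)
    unfold gNE
    split_ifs <;> norm_num
  · apply isMonge_of_dd
    intro k l hk hl
    rw [dd_fm_smul, dd_fm_NE a b hk hl, dd_gNE]
    apply mul_nonneg (by positivity)
    split_ifs <;> norm_num

lemma vSW_mem_Mpq {a b : ℕ} (ha1 : 1 ≤ a) (hap : a < p) (hb1 : 1 ≤ b) (hbq : b < q) :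
    (1/((a:ℝ) * (b:ℝ))) • SW p q a b ∈ Mpq p q := by
  refine ⟨fun ki li => ?_, sum_entries_SW ha1 hap hb1 hbq, ?_⟩
  · have : ((1/((a:ℝ) * (b:ℝ))) • SW p q a b) ki li
        = (1/((a:ℝ) * (b:ℝ))) * gSW p q a b ki.val li.val := rfl
    rw [this]
    apply mul_nonneg (by positivity)
    unfold gSW
    split_ifs <;> norm_num
  · apply isMonge_of_dd
    intro k l hk hl
    rw [dd_fm_smul, dd_fm_SW a b hk hl, dd_gSW]
    apply mul_nonneg (by positivity)
    split_ifs <;> norm_num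

lemma vHOR_mem_Mpq {i : ℕ} (hi1 : 1 ≤ i) (hip : i ≤ p) (hq : 1 ≤ q) :
    (1/(q:ℝ)) • HOR p q i ∈ Mpq p q := by
  refine ⟨fun ki li => ?_, sum_entries_HOR hi1 hip hq, ?_⟩
  · have : ((1/(q:ℝ)) • HOR p q i) ki li = (1/(q:ℝ)) * gH i ki.val li.val := rfl
    rw [this]
    apply mul_nonneg (by positivity)
    unfold gH
    split_ifs <;> norm_num
  · apply isMonge_of_dd
    intro k l hk hl
    rw [dd_fm_smul, dd_fm_HOR i hk hl, mul_zero]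

lemma vVER_mem_Mpq {j : ℕ} (hj1 : 1 ≤ j) (hjq : j ≤ q) (hp : 1 ≤ p) :
    (1/(p:ℝ)) • VER p q j ∈ Mpq p q := by
  refine ⟨fun ki li => ?_, sum_entries_VER hj1 hjq hp, ?_⟩
  · have : ((1/(p:ℝ)) • VER p q j) ki li = (1/(p:ℝ)) * gV j ki.val li.val := rfl
    rw [this]
    apply mul_nonneg (by positivity)
    unfold gV
    split_ifs <;> norm_num
  · apply isMonge_of_dd
    intro k l hk hl
    rw [dd_fm_smul, dd_fm_VER j hk hl, mul_zero]

lemma vertex_mem_Mpq (hp : 1 ≤ p) (hq : 1 ≤ q) :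
    ∀ M ∈ Vpq p q, M ∈ Mpq p q := by
  intro M hM
  rcases hM with ((hM | hM) | hM) | hM
  · obtain ⟨a, ha, b, hb, rfl⟩ := hM
    simp only [Finset.mem_Ico] at ha hb
    exact vNE_mem_Mpq ha.1 ha.2 hb.1 hb.2
  · obtain ⟨a, ha, b, hb, rfl⟩ := hM
    simp only [Finset.mem_Ico] at ha hb
    exact vSW_mem_Mpq ha.1 ha.2 hb.1 hb.2
  · obtain ⟨i, hi, rfl⟩ := hM
    simp only [Finset.mem_Icc] at hi
    exact vHOR_mem_Mpq hi.1 hi.2 hq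
  · obtain ⟨j, hj, rfl⟩ := hM
    simp only [Finset.mem_Icc] at hj
    exact vVER_mem_Mpq hj.1 hj.2 hp

lemma convex_Mpq : Convex ℝ (Mpq p q) := by
  rintro C hC D hD α β hα hβ hαβ
  refine ⟨fun ki li => ?_, ?_, ?_⟩
  · have : (α • C + β • D) ki li = α * C ki li + β * D ki li := by
      simp [Matrix.add_apply, Matrix.smul_apply, smul_eq_mul]
    rw [this]
    exact add_nonneg (mul_nonneg hα (hC.1 ki li)) (mul_nonneg hβ (hD.1 ki li))
  · have : ∀ ki : Fin p, ∀ li : Fin q,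
        (α • C + β • D) ki li = α * C ki li + β * D ki li := by
      intro ki li
      simp [Matrix.add_apply, Matrix.smul_apply, smul_eq_mul]
    calc ∑ ki : Fin p, ∑ li : Fin q, (α • C + β • D) ki li
        = ∑ ki : Fin p, ∑ li : Fin q, (α * C ki li + β * D ki li) :=
          Finset.sum_congr rfl (fun ki _ => Finset.sum_congr rfl (fun li _ => this ki li))
      _ = α * (∑ ki : Fin p, ∑ li : Fin q, C ki li)
          + β * (∑ ki : Fin p, ∑ li : Fin q, D ki li) := by
          simp only [Finset.sum_add_distrib, Finset.mul_sum]
      _ = 1 := by rw [hC.2.1, hD.2.1]; linarith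
  · intro i' I j' J hiI hjJ
    have e : ∀ ki : Fin p, ∀ li : Fin q,
        (α • C + β • D) ki li = α * C ki li + β * D ki li := by
      intro ki li
      simp [Matrix.add_apply, Matrix.smul_apply, smul_eq_mul]
    rw [e, e, e, e]
    have h1 := hC.2.2 i' I j' J hiI hjJ
    have h2 := hD.2.2 i' I j' J hiI hjJ
    nlinarith [mul_le_mul_of_nonneg_left h1 hα, mul_le_mul_of_nonneg_left h2 hβ]

lemma sum_swap_weight2 {P Q : ℕ} {A B : Finset ℕ} (c : ℕ → ℕ → ℝ)
    (g : ℕ → ℕ → ℕ → ℕ → ℝ) :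
    ∑ k ∈ range P, ∑ l ∈ range Q, ∑ a ∈ A, ∑ b ∈ B, c a b * g a b k l
      = ∑ a ∈ A, ∑ b ∈ B, c a b * ∑ k ∈ range P, ∑ l ∈ range Q, g a b k l := by
  have inner : ∀ k, ∑ l ∈ range Q, ∑ a ∈ A, ∑ b ∈ B, c a b * g a b k l
      = ∑ a ∈ A, ∑ b ∈ B, ∑ l ∈ range Q, c a b * g a b k l := by
    intro k
    rw [Finset.sum_comm]
    exact Finset.sum_congr rfl (fun a _ => Finset.sum_comm)
  rw [Finset.sum_congr rfl (fun k _ => inner k), Finset.sum_comm]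
  refine Finset.sum_congr rfl (fun a _ => ?_)
  rw [Finset.sum_comm]
  refine Finset.sum_congr rfl (fun b _ => ?_)
  simp only [← Finset.mul_sum]

lemma sum_swap_weight1 {P Q : ℕ} {A : Finset ℕ} (c : ℕ → ℝ) (g : ℕ → ℕ → ℕ → ℝ) :
    ∑ k ∈ range P, ∑ l ∈ range Q, ∑ x ∈ A, c x * g x k l
      = ∑ x ∈ A, c x * ∑ k ∈ range P, ∑ l ∈ range Q, g x k l := by
  have inner : ∀ k, ∑ l ∈ range Q, ∑ x ∈ A, c x * g x k l
      = ∑ x ∈ A, ∑ l ∈ range Q, c x * g x k l := fun k => Finset.sum_comm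
  rw [Finset.sum_congr rfl (fun k _ => inner k), Finset.sum_comm]
  refine Finset.sum_congr rfl (fun x _ => ?_)
  simp only [← Finset.mul_sum]

lemma sum_repSum (p q : ℕ) (n s : ℕ → ℕ → ℝ) (h v : ℕ → ℝ) :
    ∑ k ∈ range p, ∑ l ∈ range q, repSum p q n s h v k l
      = (∑ a ∈ Ico 1 p, ∑ b ∈ Ico 1 q, n a b * ((a:ℝ) * (b:ℝ)))
      + (∑ a ∈ Ico 1 p, ∑ b ∈ Ico 1 q, s a b * ((a:ℝ) * (b:ℝ)))
      + (∑ i ∈ Icc 1 p, h i * (q:ℝ)) + (∑ j ∈ Icc 1 q, v j * (p:ℝ)) := by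
  simp only [repSum, Finset.sum_add_distrib]
  rw [sum_swap_weight2, sum_swap_weight2, sum_swap_weight1, sum_swap_weight1]
  congr 1
  congr 1
  congr 1
  · refine Finset.sum_congr rfl (fun a ha => Finset.sum_congr rfl (fun b hb => ?_))
    simp only [Finset.mem_Ico] at ha hb
    rw [sum_gNE ha.1 (by omega) hb.1 (by omega)]
  · refine Finset.sum_congr rfl (fun a ha => Finset.sum_congr rfl (fun b hb => ?_))
    simp only [Finset.mem_Ico] at ha hb
    rw [sum_gSW ha.1 (by omega) hb.1 (by omega)]
  · refine Finset.sum_congr rfl (fun i hi => ?_)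
    simp only [Finset.mem_Icc] at hi
    rw [sum_gH hi.1 hi.2]
  · refine Finset.sum_congr rfl (fun j hj => ?_)
    simp only [Finset.mem_Icc] at hj
    rw [sum_gV hj.1 hj.2]

lemma coeff_cancel (c g x : ℝ) (hc : c ≠ 0) : (x * c) * ((1/c) * g) = x * g := by
  field_simp

end MongeAux

open MongeAux

/-- The facet `F_{ij}` of the Monge polytope, on which the Monge inequality for the
adjacent rows `i, i+1` and columns `j, j+1` (1-based) is tight, is the convex hull of the
vertex set with the two vertices `(1/(i(q-j))) • NE (i × (q-j))` and
`(1/((p-i)j)) • SW ((p-i) × j)` removed. -/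
theorem monge_polytope_facet_F (p q : ℕ) (hp : 2 ≤ p) (hq : 2 ≤ q)
    (i j : ℕ) (hi1 : 1 ≤ i) (hip : i < p) (hj1 : 1 ≤ j) (hjq : j < q) :
    {C | C ∈ Mpq p q ∧
        C ⟨i - 1, by omega⟩ ⟨j - 1, by omega⟩ + C ⟨i, by omega⟩ ⟨j, by omega⟩ =
          C ⟨i - 1, by omega⟩ ⟨j, by omega⟩ + C ⟨i, by omega⟩ ⟨j - 1, by omega⟩} =
      convexHull ℝ (Vpq p q \
        {(1 / ((i : ℝ) * ((q - j : ℕ) : ℝ))) • NE p q i (q - j),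
         (1 / (((p - i : ℕ) : ℝ) * (j : ℝ))) • SW p q (p - i) j}) := by
  classical
  have hi1p : (i - 1) + 1 < p := by omega
  have hj1q : (j - 1) + 1 < q := by omega
  have hv1pos : 0 < dd (fm ((1 / ((i : ℝ) * ((q - j : ℕ) : ℝ))) • NE p q i (q - j)))
      (i-1) (j-1) := by
    rw [dd_fm_smul, dd_fm_NE _ _ hi1p hj1q, dd_gNE,
      if_pos (show (i-1)+1 = i ∧ (j-1)+1 = q - (q - j) by omega), mul_one]
    have h1 : (0:ℝ) < (i:ℝ) := by exact_mod_cast (show 0 < i by omega)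
    have h2 : (0:ℝ) < ((q - j : ℕ):ℝ) := by exact_mod_cast (show 0 < q - j by omega)
    positivity
  have hv2pos : 0 < dd (fm ((1 / (((p - i : ℕ) : ℝ) * (j : ℝ))) • SW p q (p - i) j))
      (i-1) (j-1) := by
    rw [dd_fm_smul, dd_fm_SW _ _ hi1p hj1q, dd_gSW,
      if_pos (show (i-1)+1 = p - (p - i) ∧ (j-1)+1 = j by omega), mul_one]
    have h1 : (0:ℝ) < ((p - i : ℕ):ℝ) := by exact_mod_cast (show 0 < p - i by omega)
    have h2 : (0:ℝ) < (j:ℝ) := by exact_mod_cast (show 0 < j by omega)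
    positivity
  apply Set.Subset.antisymm
  · -- the tight face is inside the convex hull
    intro C hC
    obtain ⟨hCM, hCeq⟩ := hC
    have hcone : Cone p q (fm C) := by
      constructor
      · intro k hk l hl
        rw [fm_eq C hk hl]
        exact hCM.1 _ _
      · intro k l hk hl
        exact dd_fm_monge hCM.2.2 hk hl
    obtain ⟨n, s, h, v, hn, hs, hh, hv, hrep⟩ := cone_rep p q (fm C) hcone
    have hrepM : ∀ (ki : Fin p) (li : Fin q),
        C ki li = repSum p q n s h v ki.val li.val := by
      intro ki li
      rw [← fm_apply C ki li, hrep _ ki.isLt _ li.isLt]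
    have hdd0 : dd (fm C) (i-1) (j-1) = 0 := by
      rw [dd_fm_cell C hi1 hip hj1 hjq]
      linarith [hCeq]
    have hcell : n i (q - j) + s (p - i) j = 0 := by
      rw [← dd_repSum_cell p q i j hi1 hip hj1 hjq n s h v, ← hdd0]
      exact (dd_congr hi1p hj1q (fun k' l' hk' hl' => hrep k' hk' l' hl')).symm
    have hn0 : n i (q - j) = 0 := by
      have h1 := hn i (q - j); have h2 := hs (p - i) j; linarith
    have hs0 : s (p - i) j = 0 := by
      have h1 := hn i (q - j); have h2 := hs (p - i) j; linarith
    rw [_root_.convexHull_eq]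
    set T0 : Finset ((ℕ × ℕ) ⊕ ((ℕ × ℕ) ⊕ (ℕ ⊕ ℕ))) :=
      (Ico 1 p ×ˢ Ico 1 q).disjSum
        ((Ico 1 p ×ˢ Ico 1 q).disjSum ((Icc 1 p).disjSum (Icc 1 q))) with hT0
    set W : (ℕ × ℕ) ⊕ ((ℕ × ℕ) ⊕ (ℕ ⊕ ℕ)) → ℝ :=
      Sum.elim (fun x => n x.1 x.2 * ((x.1 : ℝ) * (x.2 : ℝ)))
        (Sum.elim (fun x => s x.1 x.2 * ((x.1 : ℝ) * (x.2 : ℝ)))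
          (Sum.elim (fun i' => h i' * (q:ℝ)) (fun j' => v j' * (p:ℝ)))) with hW
    set Z : (ℕ × ℕ) ⊕ ((ℕ × ℕ) ⊕ (ℕ ⊕ ℕ)) → Matrix (Fin p) (Fin q) ℝ :=
      Sum.elim (fun x => (1/((x.1:ℝ) * (x.2:ℝ))) • NE p q x.1 x.2)
        (Sum.elim (fun x => (1/((x.1:ℝ) * (x.2:ℝ))) • SW p q x.1 x.2)
          (Sum.elim (fun i' => (1/(q:ℝ)) • HOR p q i') (fun j' => (1/(p:ℝ)) • VER p q j')))
      with hZ
    have hzC : ∀ (ki : Fin p) (li : Fin q), (∑ x ∈ T0, W x • Z x) ki li = C ki li := by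
      intro ki li
      rw [Matrix.sum_apply]
      have e : ∀ x ∈ T0, (W x • Z x) ki li = W x * (Z x ki li) := fun x _ => rfl
      rw [Finset.sum_congr rfl e, hT0, Finset.sum_disjSum, Finset.sum_disjSum,
        Finset.sum_disjSum, Finset.sum_product, Finset.sum_product]
      simp only [hW, hZ, Sum.elim_inl, Sum.elim_inr]
      have s1 : ∀ a ∈ Ico 1 p, ∀ b ∈ Ico 1 q,
          (n a b * ((a:ℝ) * (b:ℝ))) * (((1/((a:ℝ) * (b:ℝ))) • NE p q a b) ki li)
            = n a b * gNE p q a b ki.val li.val := by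
        intro a ha b hb
        simp only [Finset.mem_Ico] at ha hb
        have h1 : (0:ℝ) < (a:ℝ) := by exact_mod_cast (show 0 < a by omega)
        have h2 : (0:ℝ) < (b:ℝ) := by exact_mod_cast (show 0 < b by omega)
        exact coeff_cancel _ _ _ (by positivity)
      have s2 : ∀ a ∈ Ico 1 p, ∀ b ∈ Ico 1 q,
          (s a b * ((a:ℝ) * (b:ℝ))) * (((1/((a:ℝ) * (b:ℝ))) • SW p q a b) ki li)
            = s a b * gSW p q a b ki.val li.val := by
        intro a ha b hb
        simp only [Finset.mem_Ico] at ha hb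
        have h1 : (0:ℝ) < (a:ℝ) := by exact_mod_cast (show 0 < a by omega)
        have h2 : (0:ℝ) < (b:ℝ) := by exact_mod_cast (show 0 < b by omega)
        exact coeff_cancel _ _ _ (by positivity)
      have s3 : ∀ i' ∈ Icc 1 p,
          (h i' * (q:ℝ)) * (((1/(q:ℝ)) • HOR p q i') ki li)
            = h i' * gH i' ki.val li.val := by
        intro i' _
        have h2 : (0:ℝ) < (q:ℝ) := by exact_mod_cast (show 0 < q by omega)
        exact coeff_cancel _ _ _ (by positivity)
      have s4 : ∀ j' ∈ Icc 1 q,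
          (v j' * (p:ℝ)) * (((1/(p:ℝ)) • VER p q j') ki li)
            = v j' * gV j' ki.val li.val := by
        intro j' _
        have h2 : (0:ℝ) < (p:ℝ) := by exact_mod_cast (show 0 < p by omega)
        exact coeff_cancel _ _ _ (by positivity)
      rw [Finset.sum_congr rfl (fun a ha => Finset.sum_congr rfl (fun b hb => s1 a ha b hb)),
        Finset.sum_congr rfl (fun a ha => Finset.sum_congr rfl (fun b hb => s2 a ha b hb)),
        Finset.sum_congr rfl s3, Finset.sum_congr rfl s4, hrepM ki li]
      simp only [repSum]
      ring
    have hWsum : ∑ x ∈ T0, W x = 1 := by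
      have e0 : (1:ℝ) = ∑ ki : Fin p, ∑ li : Fin q, C ki li := hCM.2.1.symm
      rw [sum_entries_fm] at e0
      have e1 : ∑ k ∈ range p, ∑ l ∈ range q, fm C k l
          = ∑ k ∈ range p, ∑ l ∈ range q, repSum p q n s h v k l :=
        Finset.sum_congr rfl (fun k hk => Finset.sum_congr rfl (fun l hl =>
          hrep k (Finset.mem_range.mp hk) l (Finset.mem_range.mp hl)))
      rw [e1, sum_repSum] at e0
      rw [hT0, Finset.sum_disjSum, Finset.sum_disjSum, Finset.sum_disjSum,
        Finset.sum_product, Finset.sum_product]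
      simp only [hW, Sum.elim_inl, Sum.elim_inr]
      linarith [e0]
    refine ⟨(ℕ × ℕ) ⊕ ((ℕ × ℕ) ⊕ (ℕ ⊕ ℕ)), T0.filter (fun x => W x ≠ 0), W, Z,
      ?_, ?_, ?_, ?_⟩
    · intro x _
      rcases x with ⟨a,b⟩ | (⟨a,b⟩ | (i' | j'))
      · exact mul_nonneg (hn a b) (by positivity)
      · exact mul_nonneg (hs a b) (by positivity)
      · exact mul_nonneg (hh i') (by positivity)
      · exact mul_nonneg (hv j') (by positivity)
    · rw [Finset.sum_filter_ne_zero]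
      exact hWsum
    · intro x hx
      rw [Finset.mem_filter] at hx
      obtain ⟨hx0, hxw⟩ := hx
      have hΦx : dd (fm (Z x)) (i-1) (j-1) = 0 := by
        rcases x with ⟨a,b⟩ | (⟨a,b⟩ | (i' | j'))
        · rw [hT0, Finset.inl_mem_disjSum, Finset.mem_product] at hx0
          simp only [Finset.mem_Ico] at hx0
          simp only [hZ, Sum.elim_inl]
          rw [dd_fm_smul, dd_fm_NE _ _ hi1p hj1q, dd_gNE]
          by_cases hcase : (i-1)+1 = a ∧ (j-1)+1 = q - b
          · exfalso
            apply hxw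
            have ha' : a = i := by omega
            have hb' : b = q - j := by omega
            subst ha'; subst hb'
            simp only [hW, Sum.elim_inl, hn0, zero_mul]
          · rw [if_neg hcase, mul_zero]
        · rw [hT0, Finset.inr_mem_disjSum, Finset.inl_mem_disjSum,
            Finset.mem_product] at hx0
          simp only [Finset.mem_Ico] at hx0
          simp only [hZ, Sum.elim_inr, Sum.elim_inl]
          rw [dd_fm_smul, dd_fm_SW _ _ hi1p hj1q, dd_gSW]
          by_cases hcase : (i-1)+1 = p - a ∧ (j-1)+1 = b
          · exfalso
            apply hxw
            have ha' : a = p - i := by omega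
            have hb' : b = j := by omega
            subst ha'; subst hb'
            simp only [hW, Sum.elim_inr, Sum.elim_inl, hs0, zero_mul]
          · rw [if_neg hcase, mul_zero]
        · simp only [hZ, Sum.elim_inr, Sum.elim_inl]
          rw [dd_fm_smul, dd_fm_HOR _ hi1p hj1q, mul_zero]
        · simp only [hZ, Sum.elim_inr]
          rw [dd_fm_smul, dd_fm_VER _ hi1p hj1q, mul_zero]
      refine ⟨?_, ?_⟩
      · rcases x with ⟨a,b⟩ | (⟨a,b⟩ | (i' | j'))
        · rw [hT0, Finset.inl_mem_disjSum, Finset.mem_product] at hx0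
          exact Or.inl (Or.inl (Or.inl ⟨a, hx0.1, b, hx0.2, rfl⟩))
        · rw [hT0, Finset.inr_mem_disjSum, Finset.inl_mem_disjSum,
            Finset.mem_product] at hx0
          exact Or.inl (Or.inl (Or.inr ⟨a, hx0.1, b, hx0.2, rfl⟩))
        · rw [hT0, Finset.inr_mem_disjSum, Finset.inr_mem_disjSum,
            Finset.inl_mem_disjSum] at hx0
          exact Or.inl (Or.inr ⟨i', hx0, rfl⟩)
        · rw [hT0, Finset.inr_mem_disjSum, Finset.inr_mem_disjSum,
            Finset.inr_mem_disjSum] at hx0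
          exact Or.inr ⟨j', hx0, rfl⟩
      · intro hmemv
        simp only [Set.mem_insert_iff, Set.mem_singleton_iff] at hmemv
        rcases hmemv with h' | h'
        · rw [h'] at hΦx
          exact absurd hΦx (ne_of_gt hv1pos)
        · rw [h'] at hΦx
          exact absurd hΦx (ne_of_gt hv2pos)
    · rw [Finset.centerMass_eq_of_sum_1 _ Z (by rw [Finset.sum_filter_ne_zero]; exact hWsum)]
      rw [Finset.sum_filter_of_ne (fun x _ h0 => by
        intro hw0
        apply h0
        rw [hw0, zero_smul])]
      ext ki li
      exact hzC ki li
  · -- the convex hull is inside the tight face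
    apply convexHull_min
    · intro M hM
      obtain ⟨hMV, hMn⟩ := hM
      have hMM : M ∈ Mpq p q := vertex_mem_Mpq (by omega) (by omega) M hMV
      have hΦ : dd (fm M) (i-1) (j-1) = 0 := by
        rcases hMV with ((hNE | hSW) | hH) | hV
        · obtain ⟨a, ha, b, hb, rfl⟩ := hNE
          simp only [Finset.mem_Ico] at ha hb
          rw [dd_fm_smul, dd_fm_NE _ _ hi1p hj1q, dd_gNE]
          by_cases hcase : (i-1)+1 = a ∧ (j-1)+1 = q - b
          · exfalso
            have ha' : a = i := by omega
            have hb' : b = q - j := by omega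
            subst ha'; subst hb'
            exact hMn (Set.mem_insert _ _)
          · rw [if_neg hcase, mul_zero]
        · obtain ⟨a, ha, b, hb, rfl⟩ := hSW
          simp only [Finset.mem_Ico] at ha hb
          rw [dd_fm_smul, dd_fm_SW _ _ hi1p hj1q, dd_gSW]
          by_cases hcase : (i-1)+1 = p - a ∧ (j-1)+1 = b
          · exfalso
            have ha' : a = p - i := by omega
            have hb' : b = j := by omega
            subst ha'; subst hb'
            exact hMn (Set.mem_insert_iff.mpr (Or.inr rfl))
          · rw [if_neg hcase, mul_zero]
        · obtain ⟨i', hi', rfl⟩ := hH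
          rw [dd_fm_smul, dd_fm_HOR _ hi1p hj1q, mul_zero]
        · obtain ⟨j', hj', rfl⟩ := hV
          rw [dd_fm_smul, dd_fm_VER _ hi1p hj1q, mul_zero]
      refine ⟨hMM, ?_⟩
      have hcl := dd_fm_cell M hi1 hip hj1 hjq
      rw [hΦ] at hcl
      linarith [hcl]
    · rintro C hC D hD α β hα hβ hαβ
      obtain ⟨hCM, hCeq⟩ := hC
      obtain ⟨hDM, hDeq⟩ := hD
      refine ⟨convex_Mpq hCM hDM hα hβ hαβ, ?_⟩
      have e : ∀ (ki : Fin p) (li : Fin q),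
          (α • C + β • D) ki li = α * C ki li + β * D ki li := fun ki li => by
        simp [Matrix.add_apply, Matrix.smul_apply, smul_eq_mul]
      simp only [e]
      have eC : α * (C ⟨i - 1, by omega⟩ ⟨j - 1, by omega⟩ + C ⟨i, by omega⟩ ⟨j, by omega⟩)
          = α * (C ⟨i - 1, by omega⟩ ⟨j, by omega⟩ + C ⟨i, by omega⟩ ⟨j - 1, by omega⟩) := by
        rw [hCeq]
      have eD : β * (D ⟨i - 1, by omega⟩ ⟨j - 1, by omega⟩ + D ⟨i, by omega⟩ ⟨j, by omega⟩)
          = β * (D ⟨i - 1, by omega⟩ ⟨j, by omega⟩ + D ⟨i, by omega⟩ ⟨j - 1, by omega⟩) := by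
        rw [hDeq]
      ring_nf at eC eD ⊢
      linarith [eC, eD]
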